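/- Let b : ℝ × ℝⁿ → ℝⁿ be a C¹ time-dependent vector field, globally Lipschitz in z with flow Φ(t; 0, ·), and suppose there is a constant c such that div_z b(t, z) = −c for all (t, z). Let f⁰ : ℝⁿ → ℝ be C¹. Then the function f(t, z) := e^{c t} f⁰(Φ(0; t, z)) solves the transport equation ∂ₜ f + div_z(b f) = 0 with f(0, ·) = f⁰. -/

import Mathlib

open Set Filter Metric Real intervalIntegral Asymptotics MeasureTheory Topology

noncomputable section

set_option linter.unusedSectionVars false

section Helpers
variable {E : Type*} [NormedAddCommGroup E] [NormedSpace ℝ E]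

lemma myGronwallBound_le {δ K ε x : ℝ} (hδ : 0 ≤ δ) (hK : 0 ≤ K) (hε : 0 ≤ ε) (hx : 0 ≤ x) :
    gronwallBound δ K ε x ≤ (δ + ε * x) * Real.exp (K * x) := by
  rcases eq_or_ne K 0 with h | h
  · subst h
    rw [gronwallBound_K0]
    show δ + ε * x ≤ _
    rw [zero_mul, Real.exp_zero, mul_one]
  · have hKpos : 0 < K := lt_of_le_of_ne hK (Ne.symm h)
    rw [gronwallBound_of_K_ne_0 h]
    have key : Real.exp (K * x) - 1 ≤ K * x * Real.exp (K * x) := by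
      have h2 := Real.add_one_le_exp (-(K * x))
      have h3 : Real.exp (-(K*x)) * Real.exp (K*x) = 1 := by
        rw [← Real.exp_add]; simp
      nlinarith [Real.exp_pos (K * x)]
    have : ε / K * (Real.exp (K * x) - 1) ≤ ε * x * Real.exp (K * x) := by
      rw [div_mul_eq_mul_div, div_le_iff₀ hKpos]
      nlinarith
  -- δ * exp(Kx) + ε/K(exp(Kx)-1) ≤ (δ + εx) exp(Kx)
    nlinarith [Real.exp_pos (K * x)]

/-- One-sided Gronwall, forward in time, from `t₀`. -/
lemma gron1 {f g : ℝ → E} {t₀ T : ℝ} {K M δ : ℝ}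
    (hd : ∀ s, HasDerivAt f (g s) s)
    (hbound : ∀ s, |s - t₀| ≤ T → ‖g s‖ ≤ K * ‖f s‖ + M)
    (h₀ : ‖f t₀‖ ≤ δ) :
    ∀ s, t₀ ≤ s → s - t₀ ≤ T → ‖f s‖ ≤ gronwallBound δ K M (s - t₀) := by
  intro s hs hsT
  have := norm_le_gronwallBound_of_norm_deriv_right_le (a := t₀) (b := s) (f := f) (f' := g)
    (fun u _ => (hd u).continuousAt.continuousWithinAt)
    (fun u _ => (hd u).hasDerivWithinAt.mono (fun x hx => hx)) h₀
    (fun u hu => hbound u (by rw [abs_of_nonneg (by linarith [hu.1] : (0:ℝ) ≤ u - t₀)]; linarith [hu.2.le, hu.1]))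
  exact this s ⟨hs, le_rfl⟩

/-- Two-sided Gronwall. -/
lemma gron2 {f g : ℝ → E} {t₀ T : ℝ} {K M δ : ℝ}
    (hd : ∀ s, HasDerivAt f (g s) s)
    (hbound : ∀ s, |s - t₀| ≤ T → ‖g s‖ ≤ K * ‖f s‖ + M)
    (h₀ : ‖f t₀‖ ≤ δ) :
    ∀ s, |s - t₀| ≤ T → ‖f s‖ ≤ gronwallBound δ K M |s - t₀| := by
  intro s hsT
  rcases le_total t₀ s with h | h
  · rw [abs_of_nonneg (by linarith)]
    exact gron1 hd hbound h₀ s h (by rwa [abs_of_nonneg (by linarith)] at hsT)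
  · -- reflect time
    set f₂ : ℝ → E := fun u => f (2 * t₀ - u) with hf₂
    set g₂ : ℝ → E := fun u => -g (2 * t₀ - u) with hg₂
    have hd₂ : ∀ u, HasDerivAt f₂ (g₂ u) u := by
      intro u
      have hlin : HasDerivAt (fun u : ℝ => 2 * t₀ - u) (-1) u := by
        simpa using (hasDerivAt_id u).const_sub (2 * t₀)
      have := (hd (2 * t₀ - u)).scomp u hlin
      simpa [hg₂, hf₂, neg_one_smul, Function.comp_def] using this
    have hbound₂ : ∀ u, |u - t₀| ≤ T → ‖g₂ u‖ ≤ K * ‖f₂ u‖ + M := by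
      intro u hu
      have : |2 * t₀ - u - t₀| ≤ T := by
        rw [show 2 * t₀ - u - t₀ = -(u - t₀) by ring, abs_neg]; exact hu
      simpa [hg₂, hf₂] using hbound (2 * t₀ - u) this
    have h₀₂ : ‖f₂ t₀‖ ≤ δ := by simpa [hf₂, show 2 * t₀ - t₀ = t₀ by ring] using h₀
    have := gron1 hd₂ hbound₂ h₀₂ (2 * t₀ - s) (by linarith)
      (by rw [show 2 * t₀ - s - t₀ = -(s - t₀) by ring]; rw [abs_of_nonpos (by linarith)] at hsT; linarith)
    rw [abs_of_nonpos (by linarith)]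
    simpa [hf₂, show 2 * t₀ - (2 * t₀ - s) = s by ring, show 2 * t₀ - s - t₀ = -(s - t₀) by ring] using this

/-- Global uniqueness of solutions for a globally Lipschitz field. -/
lemma uniqODE {v : ℝ → E → E} {K : NNReal} (hlip : ∀ t, LipschitzWith K (v t))
    {f g : ℝ → E} (hf : ∀ s, HasDerivAt f (v s (f s)) s) (hg : ∀ s, HasDerivAt g (v s (g s)) s)
    {t₀ : ℝ} (h : f t₀ = g t₀) : ∀ s, f s = g s := by
  intro s
  have hs : s ∈ Ioo (min t₀ s - 1) (max t₀ s + 1) :=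
    ⟨by have := min_le_right t₀ s; linarith, by have := le_max_right t₀ s; linarith⟩
  have ht₀ : t₀ ∈ Ioo (min t₀ s - 1) (max t₀ s + 1) :=
    ⟨by have := min_le_left t₀ s; linarith, by have := le_max_left t₀ s; linarith⟩
  exact ODE_solution_unique_of_mem_Ioo (s := fun _ => univ)
    (fun t _ => (hlip t).lipschitzOnWith) ht₀
    (fun u _ => ⟨hf u, trivial⟩) (fun u _ => ⟨hg u, trivial⟩) h hs


lemma abs_sub_le_of_uIcc {u a c : ℝ} (h : u ∈ Set.uIcc a c) : |u - a| ≤ |c - a| ∧ |u - c| ≤ |c - a| := by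
  rw [Set.uIcc_eq_union] at h
  rcases h with h | h <;> rw [Set.mem_Icc] at h <;>
    constructor <;> rw [abs_le] <;> constructor <;>
    cases' abs_cases (c - a) with hc hc <;> linarith [h.1, h.2, hc.1, hc.2]

section Flow
variable [CompleteSpace E]
variable {b : ℝ → E → E} {K : NNReal} (hlip : ∀ t, LipschitzWith K (b t))
  {Φ : ℝ → ℝ → E → E} (hΦself : ∀ t z, Φ t t z = z)
  (hΦ : ∀ t z s, HasDerivAt (fun s => Φ s t z) (b s (Φ s t z)) s)

include hlip hΦself hΦ

lemma flow_group (s t t' : ℝ) (z : E) : Φ s t (Φ t t' z) = Φ s t' z :=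
  uniqODE hlip (hΦ t (Φ t t' z)) (hΦ t' z) (t₀ := t) (by rw [hΦself]) s

lemma flow_dist (t : ℝ) (z₁ z₂ : E) (s : ℝ) :
    ‖Φ s t z₁ - Φ s t z₂‖ ≤ ‖z₁ - z₂‖ * Real.exp (K * |s - t|) := by
  have h := gron2 (f := fun s => Φ s t z₁ - Φ s t z₂)
    (g := fun u => b u (Φ u t z₁) - b u (Φ u t z₂))
    (t₀ := t) (T := |s - t|) (K := K) (M := 0) (δ := ‖z₁ - z₂‖)
    (fun u => (hΦ t z₁ u).sub (hΦ t z₂ u))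
    (fun u _ => by
      have h2 := (hlip u).dist_le_mul (Φ u t z₁) (Φ u t z₂)
      rw [dist_eq_norm, dist_eq_norm] at h2
      simpa using h2)
    (by simp [hΦself])
  have h2 := h s le_rfl
  rwa [gronwallBound_ε0] at h2

lemma flow_near (hbc : Continuous fun p : ℝ × E => b p.1 p.2) (t : ℝ) (z : E) :
    ∃ C : ℝ, 0 ≤ C ∧ ∀ τ s, |τ - t| ≤ 1 → |s - τ| ≤ 1 →
      ‖Φ s τ z - z‖ ≤ C * |s - τ| := by
  have hcont : ContinuousOn (fun u => b u z) (Icc (t - 2) (t + 2)) :=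
    (hbc.comp (continuous_id.prodMk continuous_const)).continuousOn
  obtain ⟨M, hM⟩ := (isCompact_Icc (a := t - 2) (b := t + 2)).exists_bound_of_continuousOn hcont
  set M₀ : ℝ := max M 0 with hM₀
  refine ⟨M₀ * Real.exp K, by positivity, fun τ s hτ hs => ?_⟩
  have key := gron2 (f := fun u => Φ u τ z - z) (g := fun u => b u (Φ u τ z))
    (t₀ := τ) (T := |s - τ|) (K := K) (M := M₀) (δ := 0)
    (fun u => by simpa using (hΦ τ z u).sub_const z)
    (fun u hu => by
      have huIcc : u ∈ Icc (t - 2) (t + 2) := by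
        cases' abs_le.1 hτ with h1 h2
        have : |u - τ| ≤ 1 := le_trans hu hs
        cases' abs_le.1 this with h3 h4
        rw [mem_Icc]
        exact ⟨by linarith, by linarith⟩
      have h1 : ‖b u (Φ u τ z)‖ ≤ ‖b u (Φ u τ z) - b u z‖ + ‖b u z‖ := by
        calc ‖b u (Φ u τ z)‖ = ‖(b u (Φ u τ z) - b u z) + b u z‖ := by rw [sub_add_cancel]
          _ ≤ ‖b u (Φ u τ z) - b u z‖ + ‖b u z‖ := norm_add_le _ _
      have h2 : ‖b u (Φ u τ z) - b u z‖ ≤ K * ‖Φ u τ z - z‖ := by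
        have := (hlip u).dist_le_mul (Φ u τ z) z
        rw [dist_eq_norm, dist_eq_norm] at this; exact this
      have h3 := hM u huIcc
      calc ‖b u (Φ u τ z)‖ ≤ K * ‖Φ u τ z - z‖ + M₀ := by
            have : M ≤ M₀ := le_max_left _ _
            linarith
        _ = K * ‖(fun u => Φ u τ z - z) u‖ + M₀ := rfl)
    (by simp [hΦself])
  have h4 := key s le_rfl
  have h5 := myGronwallBound_le (δ := 0) (K := K) (ε := M₀) (x := |s - τ|)
    le_rfl K.coe_nonneg (le_max_right _ _) (abs_nonneg _)
  have h6 : (0 + M₀ * |s - τ|) * Real.exp (K * |s - τ|) ≤ M₀ * Real.exp K * |s - τ| := by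
    rw [zero_add]
    have he : Real.exp (K * |s - τ|) ≤ Real.exp K := by
      apply Real.exp_le_exp.2
      calc (K : ℝ) * |s - τ| ≤ K * 1 := by
            apply mul_le_mul_of_nonneg_left hs K.coe_nonneg
        _ = K := mul_one _
    calc M₀ * |s - τ| * Real.exp (K * |s - τ|) ≤ M₀ * |s - τ| * Real.exp K := by
          apply mul_le_mul_of_nonneg_left he (by positivity)
      _ = M₀ * Real.exp K * |s - τ| := by ring
  calc ‖Φ s τ z - z‖ = ‖(fun u => Φ u τ z - z) s‖ := rfl
    _ ≤ gronwallBound 0 (K:ℝ) M₀ |s - τ| := h4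
    _ ≤ (0 + M₀ * |s - τ|) * Real.exp (K * |s - τ|) := h5
    _ ≤ M₀ * Real.exp K * |s - τ| := h6

lemma deriv_snd (hbc : Continuous fun p : ℝ × E => b p.1 p.2) (t : ℝ) (z : E) :
    HasDerivAt (fun τ => Φ t τ z) (-(b t z)) t := by
  rw [hasDerivAt_iff_isLittleO, Asymptotics.isLittleO_iff]
  intro ε hε
  obtain ⟨C, hC0, hC⟩ := flow_near hlip hΦself hΦ hbc t z
  have hcont : ContinuousAt (fun p : ℝ × E => b p.1 p.2) (t, z) := hbc.continuousAt
  rw [Metric.continuousAt_iff] at hcont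
  obtain ⟨δ₁, hδ₁pos, hδ₁⟩ := hcont ε hε
  have hC1 : (0:ℝ) < 2 * (C + 1) := by linarith
  have hδpos : 0 < min 1 (δ₁ / (2 * (C + 1))) := lt_min one_pos (by positivity)
  filter_upwards [Metric.ball_mem_nhds t hδpos] with τ hτ
  rw [Metric.mem_ball, Real.dist_eq] at hτ
  have hτ1 : |τ - t| ≤ 1 := le_of_lt (lt_of_lt_of_le hτ (min_le_left _ _))
  have hτ2 : |τ - t| < δ₁ / (2 * (C + 1)) := lt_of_lt_of_le hτ (min_le_right _ _)
  -- FTC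
  have hflowcont : Continuous (fun u => Φ u τ z) :=
    continuous_iff_continuousAt.2 fun u => (hΦ τ z u).continuousAt
  have hintcont : Continuous (fun u => b u (Φ u τ z)) :=
    hbc.comp (continuous_id.prodMk hflowcont)
  have hFTC : (∫ u in τ..t, b u (Φ u τ z)) = Φ t τ z - Φ τ τ z :=
    intervalIntegral.integral_eq_sub_of_hasDerivAt (fun u _ => hΦ τ z u)
      (hintcont.intervalIntegrable _ _)
  have split : (∫ u in τ..t, (b u (Φ u τ z) - b t z)) = Φ t τ z - z - (t - τ) • b t z := by
    rw [intervalIntegral.integral_sub (hintcont.intervalIntegrable _ _)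
      (intervalIntegrable_const), hFTC, hΦself, intervalIntegral.integral_const]
  have hτ1' : |t - τ| ≤ 1 := by rw [abs_sub_comm]; exact hτ1
  have hτ2' : |t - τ| < δ₁ / (2 * (C + 1)) := by rw [abs_sub_comm]; exact hτ2
  have hbound : ∀ u ∈ Set.uIoc τ t, ‖b u (Φ u τ z) - b t z‖ ≤ ε := by
    intro u hu
    have huIcc : u ∈ Set.uIcc τ t := Set.uIoc_subset_uIcc hu
    obtain ⟨hu1, hu2⟩ := abs_sub_le_of_uIcc huIcc
    have hdist : dist ((u, Φ u τ z) : ℝ × E) (t, z) < δ₁ := by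
      rw [Prod.dist_eq]
      apply max_lt
      · rw [Real.dist_eq]
        calc |u - t| ≤ |t - τ| := hu2
          _ < δ₁ / (2 * (C + 1)) := hτ2'
          _ ≤ δ₁ := by rw [div_le_iff₀ hC1]; nlinarith
      · rw [dist_eq_norm]
        calc ‖Φ u τ z - z‖ ≤ C * |u - τ| := hC τ u hτ1 (le_trans hu1 hτ1')
          _ ≤ C * |t - τ| := mul_le_mul_of_nonneg_left hu1 hC0
          _ ≤ C * (δ₁ / (2 * (C + 1))) := mul_le_mul_of_nonneg_left hτ2'.le hC0
          _ ≤ δ₁ / 2 := by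
              rw [mul_div_assoc', div_le_div_iff₀ hC1 (by norm_num : (0:ℝ) < 2)]
              nlinarith
          _ < δ₁ := by linarith
    have := hδ₁ hdist
    rw [dist_eq_norm] at this
    exact le_of_lt this
  have hnorm : ‖∫ u in τ..t, (b u (Φ u τ z) - b t z)‖ ≤ ε * |t - τ| :=
    intervalIntegral.norm_integral_le_of_norm_le_const hbound
  have heq : Φ t τ z - Φ t t z - (τ - t) • (-(b t z)) = ∫ u in τ..t, (b u (Φ u τ z) - b t z) := by
    rw [split, hΦself, smul_neg]
    module
  rw [heq]
  calc ‖∫ u in τ..t, (b u (Φ u τ z) - b t z)‖ ≤ ε * |t - τ| := hnorm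
    _ = ε * ‖τ - t‖ := by rw [Real.norm_eq_abs, abs_sub_comm]

end Flow


section LinODE
variable [CompleteSpace E]

set_option maxHeartbeats 1000000 in
set_option synthInstance.maxHeartbeats 400000 in
/-- Global existence for a linear ODE `W' = A(s) ∘ W` with bounded continuous coefficient. -/
lemma linODE {A : ℝ → E →L[ℝ] E} (hA : Continuous A) {K : ℝ} (hK : 0 ≤ K)
    (hAK : ∀ s, ‖A s‖ ≤ K) (t₀ : ℝ) :
    ∃ W : ℝ → E →L[ℝ] E, W t₀ = ContinuousLinearMap.id ℝ E ∧
      ∀ s, HasDerivAt W ((A s).comp (W s)) s := by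
  -- Picard iterates
  set N : ℕ → ℝ → E →L[ℝ] E := fun n => Nat.rec (fun _ => ContinuousLinearMap.id ℝ E)
    (fun _ Nn s => ContinuousLinearMap.id ℝ E + ∫ u in t₀..s, (A u).comp (Nn u)) n with hN
  have hN0 : ∀ s, N 0 s = ContinuousLinearMap.id ℝ E := fun _ => rfl
  have hNsucc : ∀ n s, N (n + 1) s
      = ContinuousLinearMap.id ℝ E + ∫ u in t₀..s, (A u).comp (N n u) := fun _ _ => rfl
  have hNcont : ∀ n, Continuous (N n) := by
    intro n
    induction n with
    | zero => exact continuous_const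
    | succ n ih =>
      have hint : Continuous fun u => (A u).comp (N n u) := hA.clm_comp ih
      have : Continuous fun s => ∫ u in t₀..s, (A u).comp (N n u) :=
        intervalIntegral.continuous_primitive (fun a b => hint.intervalIntegrable a b) t₀
      refine ((show Continuous fun _ : ℝ => ContinuousLinearMap.id ℝ E from continuous_const).add this).congr (fun s => ?_); exact (hNsucc n s).symm
  -- key iterate estimate
  have hd : ∀ n s, ‖N (n + 1) s - N n s‖
      ≤ (K * |s - t₀|) ^ (n + 1) / (Nat.factorial (n + 1) : ℝ) := by
    intro n
    induction n with
    | zero =>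
      intro s
      have h0 : N (0 + 1) s - N 0 s = ∫ u in t₀..s, (A u).comp (N 0 u) := by
        rw [hNsucc 0 s, hN0]; abel
      rw [h0]
      have hb : ∀ u ∈ Set.uIoc t₀ s, ‖(A u).comp (N 0 u)‖ ≤ K := by
        intro u _
        rw [hN0, ContinuousLinearMap.comp_id]
        exact hAK u
      calc ‖∫ u in t₀..s, (A u).comp (N 0 u)‖ ≤ K * |s - t₀| :=
            intervalIntegral.norm_integral_le_of_norm_le_const hb
        _ = (K * |s - t₀|) ^ (0 + 1) / (Nat.factorial (0 + 1) : ℝ) := by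
            simp [Nat.factorial]
    | succ n ih =>
      intro s
      have hint1 : Continuous fun u => (A u).comp (N (n + 1) u) := hA.clm_comp (hNcont (n + 1))
      have hint2 : Continuous fun u => (A u).comp (N n u) := hA.clm_comp (hNcont n)
      have heq : N (n + 2) s - N (n + 1) s
          = ∫ u in t₀..s, (A u).comp (N (n + 1) u - N n u) := by
        rw [hNsucc (n + 1), hNsucc n, add_sub_add_left_eq_sub, ← intervalIntegral.integral_sub
          (hint1.intervalIntegrable _ _) (hint2.intervalIntegrable _ _)]
        congr 1
        ext u
        rw [ContinuousLinearMap.comp_sub]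
      rw [heq]
      have hintd : Continuous fun u => (A u).comp (N (n + 1) u - N n u) :=
        hA.clm_comp ((hNcont (n + 1)).sub (hNcont n))
      have hmono : ‖∫ u in t₀..s, (A u).comp (N (n + 1) u - N n u)‖
          ≤ ∫ u in Set.uIoc t₀ s, K ^ (n + 2) / (Nat.factorial (n + 1) : ℝ) * |u - t₀| ^ (n + 1) := by
        refine le_trans (intervalIntegral.norm_integral_le_integral_norm_uIoc) ?_
        apply MeasureTheory.setIntegral_mono_on
        · exact hintd.norm.integrableOn_uIoc
        · exact (continuous_const.mul ((continuous_id.sub continuous_const).abs.pow _)).integrableOn_uIoc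
        · exact measurableSet_uIoc
        · intro u _
          calc ‖(A u).comp (N (n + 1) u - N n u)‖ ≤ ‖A u‖ * ‖N (n + 1) u - N n u‖ :=
                ContinuousLinearMap.opNorm_comp_le _ _
            _ ≤ K * ((K * |u - t₀|) ^ (n + 1) / (Nat.factorial (n + 1) : ℝ)) :=
                mul_le_mul (hAK u) (ih u) (norm_nonneg _) hK
            _ = K ^ (n + 2) / (Nat.factorial (n + 1) : ℝ) * |u - t₀| ^ (n + 1) := by
                rw [mul_pow]; ring
      rw [MeasureTheory.integral_const_mul, integral_pow_abs_sub_uIoc] at hmono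
      have hfac : ((Nat.factorial (n + 2) : ℕ) : ℝ) = ((n : ℝ) + 2) * (Nat.factorial (n + 1) : ℝ) := by
        rw [show n + 2 = (n + 1) + 1 from rfl, Nat.factorial_succ]
        push_cast
        ring
      have hfacne : (Nat.factorial (n + 1) : ℝ) ≠ 0 := by
        exact_mod_cast Nat.factorial_ne_zero (n + 1)
      calc ‖∫ u in t₀..s, (A u).comp (N (n + 1) u - N n u)‖
          ≤ K ^ (n + 2) / (Nat.factorial (n + 1) : ℝ) * (|s - t₀| ^ (n + 1 + 1) / (↑(n + 1) + 1)) :=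
            hmono
        _ = (K * |s - t₀|) ^ (n + 1 + 1) / (Nat.factorial (n + 1 + 1) : ℝ) := by
            rw [mul_pow, show n + 1 + 1 = n + 2 from rfl, hfac, div_mul_div_comm]
            push_cast
            ring
  -- the limit
  set W : ℝ → E →L[ℝ] E := fun s =>
    ContinuousLinearMap.id ℝ E + ∑' n, (N (n + 1) s - N n s) with hW
  have hsum : ∀ s, Summable fun n => N (n + 1) s - N n s := by
    intro s
    apply Summable.of_norm_bounded ?_ (fun n => hd n s)
    exact (summable_nat_add_iff 1).2 (Real.summable_pow_div_factorial (K * |s - t₀|))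
  have hpartial : ∀ m s, (∑ n ∈ Finset.range m, (N (n + 1) s - N n s)) = N m s - N 0 s :=
    fun m s => Finset.sum_range_sub (fun n => N n s) m
  have hpt : ∀ s, Tendsto (fun m => N m s) atTop (𝓝 (W s)) := by
    intro s
    have h1 := (hsum s).hasSum.tendsto_sum_nat
    have h2 : Tendsto (fun m => N m s - N 0 s) atTop (𝓝 (∑' n, (N (n + 1) s - N n s))) := by
      have heq2 : (fun m => ∑ n ∈ Finset.range m, (N (n + 1) s - N n s))
          = fun m => N m s - N 0 s := funext fun m => hpartial m s
      rw [← heq2]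
      exact h1
    have h3 := h2.add_const (N 0 s)
    rw [hN0 s, add_comm] at h3
    have h5 : (fun m => N m s - ContinuousLinearMap.id ℝ E + ContinuousLinearMap.id ℝ E)
        = fun m => N m s := funext fun m => by abel
    rw [h5] at h3
    rw [hW]
    exact h3
  -- uniform convergence on compacta
  have hb' : ∀ T : ℝ, 0 ≤ T → ∀ (n : ℕ) (s : ℝ), s ∈ Icc (t₀ - T) (t₀ + T) →
      ‖N (n + 1) s - N n s‖ ≤ (K * T) ^ (n + 1) / (Nat.factorial (n + 1) : ℝ) := by
    intro T hT n s hs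
    refine le_trans (hd n s) ?_
    have hx : |s - t₀| ≤ T := by
      rw [mem_Icc] at hs
      rw [abs_le]
      constructor <;> linarith [hs.1, hs.2]
    have h1 : K * |s - t₀| ≤ K * T := mul_le_mul_of_nonneg_left hx hK
    have h2 : (0:ℝ) ≤ K * |s - t₀| := by positivity
    have hfacpos : (0:ℝ) < (Nat.factorial (n + 1) : ℝ) :=
      Nat.cast_pos.2 (Nat.factorial_pos _)
    exact (div_le_div_iff_of_pos_right hfacpos).2 (pow_le_pow_left₀ h2 h1 _)
  have hsummableT : ∀ T : ℝ, Summable fun n => (K * T) ^ (n + 1) / (Nat.factorial (n + 1) : ℝ) :=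
    fun T => (summable_nat_add_iff 1).2 (Real.summable_pow_div_factorial (K * T))
  have htsumcont : ∀ T : ℝ, 0 ≤ T →
      ContinuousOn (fun s => ∑' n, (N (n + 1) s - N n s)) (Icc (t₀ - T) (t₀ + T)) := by
    intro T hT
    refine (tendstoUniformlyOn_tsum_nat (hsummableT T) (hb' T hT)).continuousOn
      (Filter.Eventually.frequently (Filter.Eventually.of_forall fun m => ?_))
    exact (continuous_finset_sum _ (fun n _ => ((hNcont (n + 1)).sub (hNcont n)))).continuousOn
  have hWcont : Continuous W := by
    rw [continuous_iff_continuousAt]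
    intro s₀
    have hT : (0:ℝ) ≤ |s₀ - t₀| + 1 := by positivity
    have h1 := le_abs_self (s₀ - t₀)
    have h2 := neg_abs_le (s₀ - t₀)
    have hco : ContinuousOn W (Icc (t₀ - (|s₀ - t₀| + 1)) (t₀ + (|s₀ - t₀| + 1))) := by
      rw [hW]
      exact continuousOn_const.add (htsumcont _ hT)
    exact hco.continuousAt (Icc_mem_nhds (by linarith) (by linarith))
  -- W solves the integral equation
  have hWeq : ∀ s, W s = ContinuousLinearMap.id ℝ E + ∫ u in t₀..s, (A u).comp (W u) := by
    intro s
    have hgW : Continuous fun u => (A u).comp (W u) := hA.clm_comp hWcont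
    set T : ℝ := |s - t₀| with hTdef
    have hT : 0 ≤ T := abs_nonneg _
    have hsub : Set.uIoc t₀ s ⊆ Icc (t₀ - T) (t₀ + T) := by
      intro u hu
      have h1 := Set.uIoc_subset_uIcc hu
      rw [Set.uIcc_eq_union] at h1
      have h3 := le_abs_self (s - t₀)
      have h4 := neg_abs_le (s - t₀)
      rcases h1 with h | h <;> rw [Set.mem_Icc] at h <;> rw [mem_Icc] <;>
        constructor <;> linarith [h.1, h.2]
    -- convergence of the integrals
    have hIconv : Tendsto (fun m => ∫ u in t₀..s, (A u).comp (N m u)) atTop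
        (𝓝 (∫ u in t₀..s, (A u).comp (W u))) := by
      rw [Metric.tendsto_atTop]
      intro ε hε
      have hε' : 0 < ε / (2 * (K * T + 1)) := by positivity
      have huni := (Metric.tendstoUniformlyOn_iff.1
        (tendstoUniformlyOn_tsum_nat (hsummableT T) (hb' T hT))) _ hε'
      -- huni : ∀ᶠ m, ∀ x ∈ Icc .., dist (tsum) (partial sum) < ε'
      rw [eventually_atTop] at huni
      obtain ⟨M, hM⟩ := huni
      refine ⟨M, fun m hm => ?_⟩
      have hptbound : ∀ u ∈ Set.uIoc t₀ s, ‖(A u).comp (N m u) - (A u).comp (W u)‖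
          ≤ K * (ε / (2 * (K * T + 1))) := by
        intro u hu
        have h5 := hM m hm u (hsub hu)
        rw [dist_eq_norm] at h5
        have h6 : ∑' n, (N (n + 1) u - N n u) - ∑ n ∈ Finset.range m, (N (n + 1) u - N n u)
            = W u - N m u := by
          rw [hpartial m u, hW]
          simp only [hN0]
          abel
        rw [h6] at h5
        have h7 : (A u).comp (N m u) - (A u).comp (W u) = (A u).comp (N m u - W u) := by
          rw [ContinuousLinearMap.comp_sub]
        rw [h7]
        calc ‖(A u).comp (N m u - W u)‖ ≤ ‖A u‖ * ‖N m u - W u‖ :=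
              ContinuousLinearMap.opNorm_comp_le _ _
          _ ≤ K * (ε / (2 * (K * T + 1))) := by
              apply mul_le_mul (hAK u) ?_ (norm_nonneg _) hK
              rw [norm_sub_rev]
              exact h5.le
      have h8 : dist (∫ u in t₀..s, (A u).comp (N m u)) (∫ u in t₀..s, (A u).comp (W u)) ≤
          K * (ε / (2 * (K * T + 1))) * |s - t₀| := by
        rw [dist_eq_norm, ← intervalIntegral.integral_sub
          ((hA.clm_comp (hNcont m)).intervalIntegrable _ _) (hgW.intervalIntegrable _ _)]
        exact intervalIntegral.norm_integral_le_of_norm_le_const hptbound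
      have h9 : K * (ε / (2 * (K * T + 1))) * |s - t₀| < ε := by
        rw [← hTdef]
        have h11 : K * (ε / (2 * (K * T + 1))) * T = (K * T) * ε / (2 * (K * T + 1)) := by ring
        rw [h11, div_lt_iff₀ (by positivity)]
        nlinarith [mul_nonneg hK hT, hε]
      exact lt_of_le_of_lt h8 h9
    have h1 : Tendsto (fun m => N (m + 1) s) atTop (𝓝 (W s)) :=
      (hpt s).comp (tendsto_add_atTop_nat 1)
    have h2 : Tendsto (fun m => N (m + 1) s) atTop
        (𝓝 (ContinuousLinearMap.id ℝ E + ∫ u in t₀..s, (A u).comp (W u))) := by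
      simp only [hNsucc]
      exact tendsto_const_nhds.add hIconv
    exact tendsto_nhds_unique h1 h2
  refine ⟨W, ?_, ?_⟩
  · rw [hWeq t₀, intervalIntegral.integral_same, add_zero]
  · intro s₀
    have hgW : Continuous fun u => (A u).comp (W u) := hA.clm_comp hWcont
    have hD : HasDerivAt (fun s => ContinuousLinearMap.id ℝ E + ∫ u in t₀..s, (A u).comp (W u))
        ((A s₀).comp (W s₀)) s₀ := by
      have := intervalIntegral.integral_hasDerivAt_right
        (hgW.intervalIntegrable t₀ s₀)
        (hgW.stronglyMeasurableAtFilter _ _) hgW.continuousAt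
      exact this.const_add _
    exact hD.congr_of_eventuallyEq (Filter.Eventually.of_forall hWeq)


end LinODE

section FlowDeriv
variable [FiniteDimensional ℝ E]

set_option maxHeartbeats 1000000 in
lemma flow_hasFDeriv
    {b : ℝ → E → E} {K : NNReal} (hlip : ∀ t, LipschitzWith K (b t))
    (hb : ContDiff ℝ 1 (fun p : ℝ × E => b p.1 p.2))
    {Φ : ℝ → ℝ → E → E} (hΦself : ∀ t z, Φ t t z = z)
    (hΦ : ∀ t z s, HasDerivAt (fun s => Φ s t z) (b s (Φ s t z)) s)
    (t : ℝ) (z : E) (s₀ : ℝ) :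
    ∃ L : E →L[ℝ] E, HasFDerivAt (fun y => Φ s₀ t y) L z := by
  have hBdiff : Differentiable ℝ (fun p : ℝ × E => b p.1 p.2) := hb.differentiable one_ne_zero
  set G : ℝ × E → E →L[ℝ] E := fun p =>
    (fderiv ℝ (fun q : ℝ × E => b q.1 q.2) p).comp (ContinuousLinearMap.inr ℝ ℝ E) with hG
  have hGcont : Continuous G := (hb.continuous_fderiv one_ne_zero).clm_comp continuous_const
  have hGderiv : ∀ s y, HasFDerivAt (b s) (G (s, y)) y := by
    intro s y
    have h1 : HasFDerivAt (fun p : ℝ × E => b p.1 p.2)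
        (fderiv ℝ (fun q : ℝ × E => b q.1 q.2) (s, y)) (s, y) := (hBdiff (s, y)).hasFDerivAt
    have h2 : HasFDerivAt (fun w : E => ((s, w) : ℝ × E))
        (ContinuousLinearMap.inr ℝ ℝ E) y := hasFDerivAt_prodMk_right s y
    have h3 := h1.comp y h2
    simpa [hG, Function.comp_def] using h3
  have hflowcont : Continuous (fun s => Φ s t z) :=
    continuous_iff_continuousAt.2 fun u => (hΦ t z u).continuousAt
  set A : ℝ → E →L[ℝ] E := fun s => G (s, Φ s t z) with hA
  have hAcont : Continuous A := hGcont.comp (continuous_id.prodMk hflowcont)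
  have hAK : ∀ s, ‖A s‖ ≤ (K : ℝ) := fun s => (hGderiv s _).le_of_lipschitz (hlip s)
  obtain ⟨W, hWt, hWd⟩ := linODE hAcont K.coe_nonneg hAK t
  refine ⟨W s₀, ?_⟩
  rw [hasFDerivAt_iff_isLittleO_nhds_zero, Asymptotics.isLittleO_iff]
  intro ε hε
  set T : ℝ := |s₀ - t| with hT
  have hT0 : 0 ≤ T := abs_nonneg _
  set R : ℝ := Real.exp (K * T) with hR
  have hR1 : 1 ≤ R := Real.one_le_exp (by positivity)
  have hR0 : 0 < R := lt_of_lt_of_le one_pos hR1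
  set ε' : ℝ := ε / (R * T * R + 1) with hε'
  have hRTR : 0 ≤ R * T * R := mul_nonneg (mul_nonneg hR0.le hT0) hR0.le
  have hε'pos : 0 < ε' := by
    apply div_pos hε
    linarith
  -- compact sets and uniform continuity of G
  have htraj : IsCompact ((fun s => Φ s t z) '' Icc (t - T) (t + T)) :=
    isCompact_Icc.image hflowcont
  set D : Set E := cthickening 1 ((fun s => Φ s t z) '' Icc (t - T) (t + T)) with hD
  have hDcomp : IsCompact D := htraj.cthickening
  have hQ : IsCompact ((Icc (t - T) (t + T)) ×ˢ D) := isCompact_Icc.prod hDcomp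
  have hunif := hQ.uniformContinuousOn_of_continuous hGcont.continuousOn
  rw [Metric.uniformContinuousOn_iff] at hunif
  obtain ⟨δ₂, hδ₂pos, hδ₂⟩ := hunif ε' hε'pos
  set δ₃ : ℝ := min (1 / R) (δ₂ / (2 * (R + 1))) with hδ₃
  have hδ₃pos : 0 < δ₃ := lt_min (by positivity) (by positivity)
  filter_upwards [Metric.ball_mem_nhds (0 : E) hδ₃pos] with h hh
  rw [mem_ball, dist_zero_right] at hh
  have hhR1 : ‖h‖ * R < 1 := by
    calc ‖h‖ * R < δ₃ * R := by
          apply mul_lt_mul_of_pos_right hh hR0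
      _ ≤ (1 / R) * R := mul_le_mul_of_nonneg_right (min_le_left _ _) hR0.le
      _ = 1 := by field_simp
  have hhR2 : ‖h‖ * R < δ₂ / 2 := by
    calc ‖h‖ * R < δ₃ * R := mul_lt_mul_of_pos_right hh hR0
      _ ≤ (δ₂ / (2 * (R + 1))) * R := mul_le_mul_of_nonneg_right (min_le_right _ _) hR0.le
      _ ≤ δ₂ / 2 := by
          rw [div_mul_eq_mul_div, div_le_div_iff₀ (by positivity) (by norm_num)]
          nlinarith [hδ₂pos]
  -- the difference function and its derivative
  set u : ℝ → E := fun s => Φ s t (z + h) - Φ s t z - (W s) h with hu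
  have hud : ∀ s, HasDerivAt u
      (b s (Φ s t (z + h)) - b s (Φ s t z) - ((A s).comp (W s)) h) s := by
    intro s
    have h3 : HasDerivAt (fun s => (W s) h) (((A s).comp (W s)) h) s := by
      have h4 := (hWd s).clm_apply (hasDerivAt_const s h)
      simpa using h4
    exact ((hΦ t (z + h) s).sub (hΦ t z s)).sub h3
  -- flow distance bound
  have hflowd : ∀ s, |s - t| ≤ T → ‖Φ s t (z + h) - Φ s t z‖ ≤ ‖h‖ * R := by
    intro s hsT
    have h5 := flow_dist hlip hΦself hΦ t (z + h) z s
    rw [add_sub_cancel_left] at h5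
    refine le_trans h5 ?_
    apply mul_le_mul_of_nonneg_left ?_ (norm_nonneg h)
    rw [hR]
    apply Real.exp_le_exp.2
    exact mul_le_mul_of_nonneg_left hsT K.coe_nonneg
  -- Gronwall bound hypothesis
  have hbound : ∀ s, |s - t| ≤ T →
      ‖b s (Φ s t (z + h)) - b s (Φ s t z) - ((A s).comp (W s)) h‖
        ≤ K * ‖u s‖ + ε' * (‖h‖ * R) := by
    intro s hsT
    have hsIcc : s ∈ Icc (t - T) (t + T) := by
      rw [abs_le] at hsT
      rw [mem_Icc]
      exact ⟨by linarith [hsT.1], by linarith [hsT.2]⟩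
    have hymem : Φ s t z ∈ (fun s => Φ s t z) '' Icc (t - T) (t + T) :=
      Set.mem_image_of_mem _ hsIcc
    have hyy' : ‖Φ s t (z + h) - Φ s t z‖ ≤ ‖h‖ * R := hflowd s hsT
    -- mean value estimate
    have hmvt : ‖b s (Φ s t (z + h)) - b s (Φ s t z) - (A s) (Φ s t (z + h) - Φ s t z)‖
        ≤ ε' * ‖Φ s t (z + h) - Φ s t z‖ := by
      have hbd : ∀ ξ ∈ closedBall (Φ s t z) (‖h‖ * R), ‖G (s, ξ) - A s‖ ≤ ε' := by
        intro ξ hξ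
        rw [mem_closedBall, dist_eq_norm] at hξ
        have hξD : ξ ∈ D := by
          apply mem_cthickening_of_dist_le ξ (Φ s t z) 1 _ hymem
          rw [dist_eq_norm]
          exact le_trans hξ (le_of_lt hhR1)
        have hyD : Φ s t z ∈ D := self_subset_cthickening _ hymem
        have hQ1 : ((s, ξ) : ℝ × E) ∈ (Icc (t - T) (t + T)) ×ˢ D := ⟨hsIcc, hξD⟩
        have hQ2 : ((s, Φ s t z) : ℝ × E) ∈ (Icc (t - T) (t + T)) ×ˢ D := ⟨hsIcc, hyD⟩
        have hdist : dist ((s, ξ) : ℝ × E) (s, Φ s t z) < δ₂ := by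
          rw [Prod.dist_eq]
          apply max_lt (by simpa using hδ₂pos)
          rw [dist_eq_norm]
          calc ‖ξ - Φ s t z‖ ≤ ‖h‖ * R := hξ
            _ < δ₂ / 2 := hhR2
            _ < δ₂ := by linarith
        have := hδ₂ _ hQ1 _ hQ2 hdist
        rw [dist_eq_norm] at this
        exact le_of_lt this
      have := Convex.norm_image_sub_le_of_norm_hasFDerivWithin_le'
        (f := b s) (f' := fun ξ => G (s, ξ)) (φ := A s) (C := ε')
        (s := closedBall (Φ s t z) (‖h‖ * R))
        (fun ξ _ => (hGderiv s ξ).hasFDerivWithinAt) hbd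
        (convex_closedBall _ _) (mem_closedBall_self (by positivity))
        (by rw [mem_closedBall, dist_eq_norm]; exact hyy')
      exact this
    have hsplit : b s (Φ s t (z + h)) - b s (Φ s t z) - ((A s).comp (W s)) h
        = (b s (Φ s t (z + h)) - b s (Φ s t z) - (A s) (Φ s t (z + h) - Φ s t z))
          + (A s) (u s) := by
      have h6 : ((A s).comp (W s)) h = (A s) ((W s) h) := rfl
      rw [h6, hu]
      simp only [map_sub]
      abel
    rw [hsplit]
    calc ‖(b s (Φ s t (z + h)) - b s (Φ s t z) - (A s) (Φ s t (z + h) - Φ s t z))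
          + (A s) (u s)‖
        ≤ ‖b s (Φ s t (z + h)) - b s (Φ s t z) - (A s) (Φ s t (z + h) - Φ s t z)‖
          + ‖(A s) (u s)‖ := norm_add_le _ _
      _ ≤ ε' * (‖h‖ * R) + K * ‖u s‖ := by
          apply add_le_add
          · exact le_trans hmvt (mul_le_mul_of_nonneg_left hyy' hε'pos.le)
          · calc ‖(A s) (u s)‖ ≤ ‖A s‖ * ‖u s‖ := (A s).le_opNorm _
              _ ≤ K * ‖u s‖ := mul_le_mul_of_nonneg_right (hAK s) (norm_nonneg _)
      _ = K * ‖u s‖ + ε' * (‖h‖ * R) := by ring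
  -- initial condition
  have hu0 : ‖u t‖ ≤ 0 := by
    rw [hu]
    simp only [hΦself, hWt]
    simp
  -- Gronwall
  have hgron := gron2 hud hbound hu0 s₀ le_rfl
  have hfinal : ‖u s₀‖ ≤ ε * ‖h‖ := by
    refine le_trans hgron ?_
    refine le_trans (myGronwallBound_le le_rfl K.coe_nonneg (by positivity) (abs_nonneg _)) ?_
    rw [← hT, ← hR]
    have hstep : (0 + ε' * (‖h‖ * R) * T) * R ≤ ε * ‖h‖ := by
      rw [zero_add]
      have hfrac : ε' * (R * T * R) ≤ ε := by
        rw [hε']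
        rw [div_mul_eq_mul_div, div_le_iff₀ (by linarith)]
        nlinarith [hRTR, hε.le]
      calc ε' * (‖h‖ * R) * T * R = ‖h‖ * (ε' * (R * T * R)) := by ring
        _ ≤ ‖h‖ * ε := mul_le_mul_of_nonneg_left hfrac (norm_nonneg _)
        _ = ε * ‖h‖ := by ring
    exact hstep
  exact hfinal


end FlowDeriv
end Helpers

set_option maxHeartbeats 1000000 in
/-- Representation formula along characteristics: if `div_z b = -c` then
`f(t,z) = e^{ct} f⁰(Φ(0;t,z))` solves `∂ₜ f + div_z (b f) = 0`, `f(0,·)=f⁰`. -/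
theorem stmt5 (n : ℕ)
    (b : ℝ → EuclideanSpace ℝ (Fin n) → EuclideanSpace ℝ (Fin n))
    (hb : ContDiff ℝ 1 (fun p : ℝ × EuclideanSpace ℝ (Fin n) => b p.1 p.2))
    (K : NNReal) (hlip : ∀ t, LipschitzWith K (b t))
    (Φ : ℝ → ℝ → EuclideanSpace ℝ (Fin n) → EuclideanSpace ℝ (Fin n))
    (hΦself : ∀ t z, Φ t t z = z)
    (hΦ : ∀ t z s, HasDerivAt (fun s => Φ s t z) (b s (Φ s t z)) s)
    (c : ℝ)
    (hdiv : ∀ t z, ∑ i, (fderiv ℝ (b t) z (EuclideanSpace.single i 1)) i = -c)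
    (f0 : EuclideanSpace ℝ (Fin n) → ℝ) (hf0 : ContDiff ℝ 1 f0)
    (f : ℝ → EuclideanSpace ℝ (Fin n) → ℝ)
    (hf : f = fun t z => Real.exp (c * t) * f0 (Φ 0 t z)) :
    (∀ z, f 0 z = f0 z) ∧
    ∀ t z, deriv (fun τ => f τ z) t
        + ∑ i, fderiv ℝ (fun y => (b t y) i * f t y) z (EuclideanSpace.single i 1) = 0 := by
  have hbc : Continuous (fun p : ℝ × EuclideanSpace ℝ (Fin n) => b p.1 p.2) := hb.continuous
  subst hf
  constructor
  · intro z
    simp [hΦself]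
  intro t z
  simp only []
  obtain ⟨L0, hL0⟩ := flow_hasFDeriv hlip hb hΦself hΦ t z 0
  have hf0d : HasFDerivAt f0 (fderiv ℝ f0 (Φ 0 t z)) (Φ 0 t z) :=
    (hf0.differentiable one_ne_zero _).hasFDerivAt
  set LF := (fderiv ℝ f0 (Φ 0 t z)).comp L0 with hLF
  have hF : HasFDerivAt (fun y => f0 (Φ 0 t y)) LF z := hf0d.comp z hL0
  have hgroup : ∀ τ, f0 (Φ 0 τ z) = f0 (Φ 0 t (Φ t τ z)) := fun τ => by
    rw [flow_group hlip hΦself hΦ 0 t τ z]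
  have hh : HasDerivAt (fun τ => Φ t τ z) (-(b t z)) t := deriv_snd hlip hΦself hΦ hbc t z
  have hF' : HasFDerivAt (fun y => f0 (Φ 0 t y)) LF (Φ t t z) := by
    rw [hΦself]; exact hF
  have hd2 : HasDerivAt (fun τ => f0 (Φ 0 t (Φ t τ z))) (LF (-(b t z))) t :=
    HasFDerivAt.comp_hasDerivAt (l := fun y => f0 (Φ 0 t y)) (f := fun τ => Φ t τ z) t hF' hh
  have hd1 : HasDerivAt (fun τ => Real.exp (c * τ)) (Real.exp (c * t) * c) t := by
    have h1 : HasDerivAt (fun τ : ℝ => c * τ) c t := by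
      simpa using (hasDerivAt_id t).const_mul c
    exact h1.exp
  have hd3 : HasDerivAt (fun τ => Real.exp (c * τ) * f0 (Φ 0 τ z))
      (Real.exp (c * t) * c * f0 (Φ 0 t (Φ t t z))
        + Real.exp (c * t) * (LF (-(b t z)))) t := by
    have heq : (fun τ => Real.exp (c * τ) * f0 (Φ 0 τ z))
        = fun τ => Real.exp (c * τ) * f0 (Φ 0 t (Φ t τ z)) := funext fun τ => by rw [hgroup τ]
    rw [heq]
    exact hd1.mul hd2
  have hderiv : deriv (fun τ => Real.exp (c * τ) * f0 (Φ 0 τ z)) t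
      = Real.exp (c * t) * c * f0 (Φ 0 t z) + Real.exp (c * t) * (LF (-(b t z))) := by
    have h5 := hd3.deriv
    rwa [hΦself] at h5
  -- space derivatives
  have hbtd : HasFDerivAt (b t) (fderiv ℝ (b t) z) z := by
    have h1 := (hb.differentiable one_ne_zero (t, z)).hasFDerivAt
    have h2 := hasFDerivAt_prodMk_right (𝕜 := ℝ) t z
    have h3 := h1.comp z h2
    exact (h3.differentiableAt).hasFDerivAt
  set Dbt := fderiv ℝ (b t) z with hDbt
  have hbti : ∀ i, HasFDerivAt (fun y => (b t y) i)
      ((EuclideanSpace.proj (𝕜 := ℝ) i).comp Dbt) z := fun i => by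
    have := (EuclideanSpace.proj (𝕜 := ℝ) i).hasFDerivAt.comp z hbtd
    simpa [Function.comp_def] using this
  have hfT : HasFDerivAt (fun y => Real.exp (c * t) * f0 (Φ 0 t y))
      (Real.exp (c * t) • LF) z := hF.const_mul _
  have hterm : ∀ i : Fin n, fderiv ℝ
      (fun y => (b t y) i * (Real.exp (c * t) * f0 (Φ 0 t y))) z (EuclideanSpace.single i 1)
      = Real.exp (c * t) * ((b t z) i * LF (EuclideanSpace.single i 1))
        + (Dbt (EuclideanSpace.single i 1)) i * (Real.exp (c * t) * f0 (Φ 0 t z)) := by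
    intro i
    have hp := (hbti i).mul hfT
    rw [HasFDerivAt.fderiv (f := fun y => (b t y) i * (Real.exp (c * t) * f0 (Φ 0 t y))) hp]
    simp only [ContinuousLinearMap.add_apply, ContinuousLinearMap.smul_apply,
      ContinuousLinearMap.smulRight_apply, ContinuousLinearMap.comp_apply, smul_eq_mul]
    have : (EuclideanSpace.proj (𝕜 := ℝ) i) (Dbt (EuclideanSpace.single i 1))
        = (Dbt (EuclideanSpace.single i 1)) i := rfl
    rw [this]
    ring
  have hsum1 : ∑ i, (b t z) i * (LF (EuclideanSpace.single i 1)) = LF (b t z) := by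
    have h2 : (∑ i, (b t z) i • EuclideanSpace.single (𝕜 := ℝ) i (1:ℝ)) = b t z := by
      have h3 := (EuclideanSpace.basisFun (Fin n) ℝ).sum_repr (b t z)
      simp only [EuclideanSpace.basisFun_repr, EuclideanSpace.basisFun_apply] at h3
      exact h3
    calc ∑ i, (b t z) i * (LF (EuclideanSpace.single i 1))
        = ∑ i, LF ((b t z) i • EuclideanSpace.single i 1) := by
          refine Finset.sum_congr rfl fun i _ => ?_
          rw [_root_.map_smul, smul_eq_mul]
      _ = LF (∑ i, (b t z) i • EuclideanSpace.single i 1) := (map_sum LF _ _).symm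
      _ = LF (b t z) := by rw [h2]
  rw [hderiv]
  have hsum2 : ∑ i, fderiv ℝ
      (fun y => (b t y) i * (Real.exp (c * t) * f0 (Φ 0 t y))) z (EuclideanSpace.single i 1)
      = Real.exp (c * t) * LF (b t z) + (-c) * (Real.exp (c * t) * f0 (Φ 0 t z)) := by
    rw [Finset.sum_congr rfl fun i _ => hterm i, Finset.sum_add_distrib,
      ← Finset.mul_sum, hsum1, ← Finset.sum_mul]
    congr 2
    exact hdiv t z
  rw [hsum2, map_neg]
  ring
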